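/- Let G be a finite group, E an invertible G-lattice and C a coflabby G-lattice. Then every short exact sequence of G-lattices 0 → C → N → E → 0 splits. -/

import Mathlib

noncomputable section

namespace Paper

open Function

variable {G : Type} [Group G]

/-- The Tate cohomology `Ĥ⁻¹` of a finite group acting on a `ℤ`-module vanishes:
every element killed by the norm map lies in the augmentation submodule. -/
def Hneg1Vanish [Finite G] {M : Type} [AddCommGroup M] [Module ℤ M]
    (ρ : Representation ℤ G M) : Prop :=
  ∀ m : M, (∑ᶠ g : G, ρ g m) = 0 →
    m ∈ Submodule.span ℤ {x : M | ∃ (g : G) (y : M), x = ρ g y - y}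

/-- The Tate cohomology `Ĥ⁰` vanishes: every invariant element is a norm. -/
def Hhat0Vanish [Finite G] {M : Type} [AddCommGroup M] [Module ℤ M]
    (ρ : Representation ℤ G M) : Prop :=
  ∀ m : M, (∀ g : G, ρ g m = m) → ∃ y : M, m = ∑ᶠ g : G, ρ g y

/-- `H¹` vanishes: every inhomogeneous 1-cocycle is a 1-coboundary. -/
def H1Vanish {M : Type} [AddCommGroup M] [Module ℤ M]
    (ρ : Representation ℤ G M) : Prop :=
  ∀ f : G → M, (∀ g h : G, f (g * h) = ρ g (f h) + f g) →
    ∃ m : M, ∀ g : G, f g = ρ g m - m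

/-- A `G`-lattice: a finitely generated `ℤ`-free module with a `G`-action. -/
structure GLat (G : Type) [Group G] : Type 1 where
  carrier : Type
  [ab : AddCommGroup carrier]
  [mod : Module ℤ carrier]
  [free : Module.Free ℤ carrier]
  [fin : Module.Finite ℤ carrier]
  ρ : Representation ℤ G carrier

attribute [instance] GLat.ab GLat.mod GLat.free GLat.fin

attribute [local instance 2000] Prod.instModule

instance : CoeSort (GLat G) Type := ⟨GLat.carrier⟩

/-- Build a `G`-lattice from a representation on a finite free `ℤ`-module. -/
def ofRep (M : Type) [AddCommGroup M] [Module ℤ M] [Module.Free ℤ M] [Module.Finite ℤ M]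
    (ρ : Representation ℤ G M) : GLat G :=
  { carrier := M, ρ := ρ }

namespace GLat

/-- Direct sum of two `G`-lattices. -/
def sum (M N : GLat G) : GLat G where
  carrier := M.carrier × N.carrier
  ab := Prod.instAddCommGroup
  mod := Prod.instModule
  free := Module.Free.prod ℤ M.carrier N.carrier
  fin := Module.Finite.prod
  ρ :=
    { toFun := fun g => (M.ρ g).prodMap (N.ρ g)
      map_one' := by
        letI : Module ℤ (M.carrier × N.carrier) := Prod.instModule
        refine LinearMap.ext fun x => ?_
        simp
      map_mul' := fun g h => by
        letI : Module ℤ (M.carrier × N.carrier) := Prod.instModule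
        refine LinearMap.ext fun x => ?_
        simp }

/-- Equivariant isomorphism of `G`-lattices. -/
def Iso (M N : GLat G) : Prop :=
  ∃ e : M.carrier ≃ₗ[ℤ] N.carrier, ∀ (g : G) (m : M.carrier), e (M.ρ g m) = N.ρ g (e m)

/-- A `ℤ`-linear map of `G`-lattices is equivariant. -/
def IsEquivariant (M N : GLat G) (f : M.carrier →ₗ[ℤ] N.carrier) : Prop :=
  ∀ (g : G) (m : M.carrier), f (M.ρ g m) = N.ρ g (f m)

/-- A permutation `G`-lattice: it has a `ℤ`-basis permuted by `G`. -/
def IsPermutation (M : GLat G) : Prop :=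
  ∃ (ι : Type) (_ : Fintype ι) (b : Module.Basis ι ℤ M.carrier) (σ : G →* Equiv.Perm ι),
    ∀ (g : G) (i : ι), M.ρ g (b i) = b (σ g i)

/-- A stably permutation `G`-lattice. -/
def IsStablyPermutation (M : GLat G) : Prop :=
  ∃ P Q : GLat G, P.IsPermutation ∧ Q.IsPermutation ∧ (M.sum P).Iso Q

/-- An invertible `G`-lattice: a direct summand of a permutation lattice. -/
def IsInvertible (M : GLat G) : Prop :=
  ∃ N Q : GLat G, Q.IsPermutation ∧ (M.sum N).Iso Q

/-- Flabby: `Ĥ⁻¹(H, M) = 0` for every subgroup `H ≤ G`. -/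
def IsFlabby [Finite G] (M : GLat G) : Prop :=
  ∀ H : Subgroup G, Hneg1Vanish (MonoidHom.comp M.ρ H.subtype)

/-- Coflabby: `H¹(H, M) = 0` for every subgroup `H ≤ G`. -/
def IsCoflabby (M : GLat G) : Prop :=
  ∀ H : Subgroup G, H1Vanish (MonoidHom.comp M.ρ H.subtype)

/-- Restriction of a `G`-lattice to a subgroup `H`. -/
def res (H : Subgroup G) (M : GLat G) : GLat H :=
  { carrier := M.carrier, ρ := MonoidHom.comp M.ρ H.subtype }

end GLat

/-- A flabby resolution `0 → M → P → F → 0` of a `G`-lattice `M`: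
`P` is permutation and `F` is flabby. -/
structure FlabbyResolution [Finite G] (M : GLat G) : Type 1 where
  P : GLat G
  F : GLat G
  incl : M.carrier →ₗ[ℤ] P.carrier
  proj : P.carrier →ₗ[ℤ] F.carrier
  equiv_incl : GLat.IsEquivariant M P incl
  equiv_proj : GLat.IsEquivariant P F proj
  inj : Function.Injective incl
  surj : Function.Surjective proj
  exact : LinearMap.range incl = LinearMap.ker proj
  permP : P.IsPermutation
  flabbyF : F.IsFlabby

/-- The flabby class `[M]^{fl}` is zero: the flabby part of a flabby resolution
is stably permutation. -/
def FlabbyClassZero [Finite G] (M : GLat G) : Prop :=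
  ∃ R : FlabbyResolution M, R.F.IsStablyPermutation

/-- The flabby class `[M]^{fl}` is invertible. -/
def FlabbyClassInvertible [Finite G] (M : GLat G) : Prop :=
  ∃ R : FlabbyResolution M, R.F.IsInvertible

/-- The permutation `G`-lattice `ℤ[S]` on a finite `G`-set `S`. -/
def ofMulActionGLat (G : Type) [Group G] (S : Type) [MulAction G S] [Finite S] : GLat G :=
  letI : Fintype S := Fintype.ofFinite S
  { carrier := S →₀ ℤ
    fin := Module.Finite.equiv (Finsupp.linearEquivFunOnFinite ℤ ℤ S).symm
    ρ :=
      { toFun := fun g => Finsupp.lmapDomain ℤ ℤ (g • ·)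
        map_one' := by ext; simp
        map_mul' := fun x y => by ext; simp [mul_smul] } }

/-- The trivial rank-one `G`-lattice `ℤ`. -/
def trivialGLat (G : Type) [Group G] : GLat G :=
  { carrier := ℤ, ρ := (1 : Representation ℤ G ℤ) }

/-- Orbit representatives for a `G`-action on `ι` given by `σ`. -/
theorem orbit_reps {G ι : Type} [Group G] (σ : G →* Equiv.Perm ι) :
    ∃ (std : ι → ι) (gg : ι → G),
      (∀ a, σ (gg a) (std a) = a) ∧ ∀ (g : G) (a : ι), std (σ g a) = std a := by
  have hr : Equivalence (fun a c : ι => ∃ g : G, σ g a = c) := by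
    constructor
    · exact fun a => ⟨1, by simp⟩
    · rintro a c ⟨g, hg⟩
      exact ⟨g⁻¹, by rw [← hg]; simp⟩
    · rintro a c d ⟨g, hg⟩ ⟨g', hg'⟩
      exact ⟨g' * g, by rw [map_mul, Equiv.Perm.mul_apply, hg, hg']⟩
  set st : Setoid ι := ⟨fun a c => ∃ g : G, σ g a = c, hr⟩ with hst
  refine ⟨fun a => Quotient.out (Quotient.mk st a), ?_, ?_, ?_⟩
  · exact fun a => Classical.choose (Quotient.exact (Quotient.out_eq (Quotient.mk st a)))
  · exact fun a => Classical.choose_spec (Quotient.exact (Quotient.out_eq (Quotient.mk st a)))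
  · intro g a
    have : Quotient.mk st (σ g a) = Quotient.mk st a :=
      Quotient.sound ⟨g⁻¹, by simp⟩
    show (Quotient.mk st (σ g a)).out = (Quotient.mk st a).out
    rw [this]

/-- The permutation case of the splitting theorem. -/
theorem perm_split {G : Type} [Group G] [Finite G]
    (C N E : GLat G) (hE : E.IsPermutation) (hC : C.IsCoflabby)
    (i : C.carrier →ₗ[ℤ] N.carrier) (p : N.carrier →ₗ[ℤ] E.carrier)
    (hi : GLat.IsEquivariant C N i) (hp : GLat.IsEquivariant N E p)
    (hinj : Function.Injective i) (hsurj : Function.Surjective p)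
    (hexact : LinearMap.range i = LinearMap.ker p) :
    ∃ s : E.carrier →ₗ[ℤ] N.carrier, GLat.IsEquivariant E N s ∧ p.comp s = LinearMap.id := by
  obtain ⟨ι, _, b, σ, hb⟩ := hE
  have hpi : ∀ c : C.carrier, p (i c) = 0 := by
    intro c
    have : i c ∈ LinearMap.ker p := hexact ▸ LinearMap.mem_range_self i c
    exact this
  -- Invariant lifts of basis vectors, using coflabbiness at stabilizers
  have key : ∀ j : ι, ∃ n : N.carrier, p n = b j ∧ ∀ h : G, σ h j = j → N.ρ h n = n := by
    intro j
    obtain ⟨n₀, hn₀⟩ := hsurj (b j)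
    set H : Subgroup G :=
      { carrier := {g : G | σ g j = j}
        one_mem' := by simp
        mul_mem' := by
          intro a c ha hc
          simp only [Set.mem_setOf_eq, map_mul, Equiv.Perm.mul_apply] at *
          rw [hc, ha]
        inv_mem' := by
          intro a ha
          simp only [Set.mem_setOf_eq] at *
          conv_lhs => rw [← ha]
          simp } with hH
    have hker : ∀ h : H, ∃ c : C.carrier, i c = N.ρ (h : G) n₀ - n₀ := by
      intro h
      have hmem : N.ρ (h : G) n₀ - n₀ ∈ LinearMap.ker p := by
        have hj : σ (h : G) j = j := h.2
        rw [LinearMap.mem_ker, map_sub, hp, hn₀, hb, hj, sub_self]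
      rw [← hexact] at hmem
      exact hmem
    choose f hf using hker
    have hcomp : ∀ (g : H) (c : C.carrier), (MonoidHom.comp C.ρ H.subtype) g c = C.ρ (g : G) c :=
      fun _ _ => rfl
    have hco : ∀ g h : H, f (g * h) = (MonoidHom.comp C.ρ H.subtype) g (f h) + f g := by
      intro g h
      apply hinj
      rw [map_add, hcomp, hi, hf, hf, hf]
      have hmul : ((g * h : H) : G) = (g : G) * (h : G) := rfl
      rw [hmul, map_mul, Module.End.mul_apply, map_sub]
      abel
    obtain ⟨m, hm⟩ := hC H f hco
    refine ⟨n₀ - i m, ?_, ?_⟩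
    · rw [map_sub, hn₀, hpi, sub_zero]
    · intro h hh
      have t := hf ⟨h, hh⟩
      have hcast : ((⟨h, hh⟩ : H) : G) = h := rfl
      rw [hm ⟨h, hh⟩, map_sub, hcomp, hcast] at t
      rw [map_sub, ← hi]
      rw [sub_eq_sub_iff_sub_eq_sub]
      exact t.symm
  choose n' hn'p hn'inv using key
  obtain ⟨std, gg, hgg, hstd⟩ := orbit_reps σ
  set v : ι → N.carrier := fun a => N.ρ (gg a) (n' (std a)) with hv
  haveI : @SMulCommClass ℤ ℤ N.carrier N.mod.toSMul N.mod.toSMul :=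
    @SMulCommClass.mk ℤ ℤ N.carrier N.mod.toSMul N.mod.toSMul (fun a c x =>
      (@mul_smul ℤ N.carrier _ N.mod.toMulAction.toSemigroupAction a c x).symm.trans
        ((mul_comm a c) ▸ (@mul_smul ℤ N.carrier _ N.mod.toMulAction.toSemigroupAction c a x)))
  refine ⟨b.constr ℤ v, ?_, ?_⟩
  · intro g m
    have heq : (b.constr ℤ v).comp (E.ρ g) = (N.ρ g).comp (b.constr ℤ v) := by
      apply b.ext
      intro a
      simp only [LinearMap.comp_apply, hb, Module.Basis.constr_basis, hv]
      rw [hstd g a]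
      -- goal: N.ρ (gg (σ g a)) (n' (std a)) = N.ρ g (N.ρ (gg a) (n' (std a)))
      have hstab : σ ((g * gg a)⁻¹ * gg (σ g a)) (std a) = std a := by
        have h1 : σ (gg (σ g a)) (std a) = σ g a := by
          have := hgg (σ g a)
          rwa [hstd g a] at this
        have h2 : σ (g * gg a) (std a) = σ g a := by
          rw [map_mul, Equiv.Perm.mul_apply, hgg a]
        rw [map_mul, Equiv.Perm.mul_apply, h1, map_inv, ← h2]
        simp
      have hinv := hn'inv (std a) _ hstab
      calc N.ρ (gg (σ g a)) (n' (std a))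
          = N.ρ ((g * gg a) * ((g * gg a)⁻¹ * gg (σ g a))) (n' (std a)) := by
            group
        _ = N.ρ (g * gg a) (N.ρ ((g * gg a)⁻¹ * gg (σ g a)) (n' (std a))) := by
            rw [map_mul]; rfl
        _ = N.ρ g (N.ρ (gg a) (n' (std a))) := by
            rw [hinv, map_mul]; rfl
    exact DFunLike.congr_fun heq m
  · apply b.ext
    intro a
    simp only [LinearMap.comp_apply, Module.Basis.constr_basis, LinearMap.id_apply, hv]
    rw [hp, hn'p, hb, hgg]

/-- Every short exact sequence of `G`-lattices `0 → C → N → E → 0`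
with `C` coflabby and `E` invertible splits. -/
theorem ses_coflabby_invertible_splits (G : Type) [Group G] [Finite G]
    (C N E : GLat G) (hE : E.IsInvertible) (hC : C.IsCoflabby)
    (i : C.carrier →ₗ[ℤ] N.carrier) (p : N.carrier →ₗ[ℤ] E.carrier)
    (hi : GLat.IsEquivariant C N i) (hp : GLat.IsEquivariant N E p)
    (hinj : Function.Injective i) (hsurj : Function.Surjective p)
    (hexact : LinearMap.range i = LinearMap.ker p) :
    ∃ s : E.carrier →ₗ[ℤ] N.carrier, GLat.IsEquivariant E N s ∧ p.comp s = LinearMap.id := by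
  obtain ⟨N', Q, hQ, e, he⟩ := hE
  -- extended exact sequence  0 → C → N × N' → Q → 0
  set i₂ : C.carrier →ₗ[ℤ] (N.sum N').carrier := LinearMap.prod i 0 with hi₂def
  set p₂ : (N.sum N').carrier →ₗ[ℤ] Q.carrier :=
    e.toLinearMap.comp (LinearMap.prodMap p LinearMap.id) with hp₂def
  have hρsum : ∀ (M M' : GLat G) (g : G) (x : (M.sum M').carrier),
      (M.sum M').ρ g x = (M.ρ g x.1, M'.ρ g x.2) := fun M M' g x => rfl
  have hi₂ : GLat.IsEquivariant C (N.sum N') i₂ := by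
    intro g c
    show (i (C.ρ g c), (0 : N'.carrier)) = (N.sum N').ρ g (i c, 0)
    rw [hρsum N N' g (i c, 0)]
    simp [hi g c]
  have hp₂ : GLat.IsEquivariant (N.sum N') Q p₂ := by
    intro g x
    show e (p ((N.sum N').ρ g x).1, ((N.sum N').ρ g x).2) = Q.ρ g (e (p x.1, x.2))
    rw [hρsum, ← he g (p x.1, x.2)]
    congr 1
    rw [hρsum E N' g (p x.1, x.2)]
    simp [hp g x.1]; rfl
  have hinj₂ : Function.Injective i₂ := by
    intro c c' h
    exact hinj (congrArg Prod.fst h)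
  have hsurj₂ : Function.Surjective p₂ := by
    intro q
    obtain ⟨n, hn⟩ := hsurj (e.symm q).1
    refine ⟨(n, (e.symm q).2), ?_⟩
    show e (p n, (e.symm q).2) = q
    rw [hn]
    exact e.apply_symm_apply q
  have hexact₂ : LinearMap.range i₂ = LinearMap.ker p₂ := by
    apply le_antisymm
    · rintro x ⟨c, rfl⟩
      show e (p (i c), (0 : N'.carrier)) = 0
      have hpc : p (i c) = 0 := by
        have : i c ∈ LinearMap.ker p := hexact ▸ LinearMap.mem_range_self i c
        exact this
      rw [hpc]
      exact map_zero e
    · rintro x hx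
      have hx' : e (p x.1, x.2) = 0 := hx
      have hx0 : (p x.1, x.2) = (0 : E.carrier × N'.carrier) := by
        apply e.injective
        rw [hx']
        exact (map_zero e).symm
      have h1 : p x.1 = 0 := congrArg Prod.fst hx0
      have h2 : x.2 = 0 := congrArg Prod.snd hx0
      have : x.1 ∈ LinearMap.range i := hexact ▸ h1
      obtain ⟨c, hc⟩ := this
      refine ⟨c, ?_⟩
      show (i c, (0 : N'.carrier)) = x
      rw [hc, ← h2]
      exact Prod.mk.eta

  obtain ⟨s₂, hs₂eq, hs₂p⟩ := perm_split C (N.sum N') Q hQ hC i₂ p₂ hi₂ hp₂ hinj₂ hsurj₂ hexact₂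
  set s : E.carrier →ₗ[ℤ] N.carrier :=
    (LinearMap.fst ℤ N.carrier N'.carrier).comp
      (s₂.comp (e.toLinearMap.comp (LinearMap.inl ℤ E.carrier N'.carrier))) with hs
  have hkey : ∀ e₀ : E.carrier, p ((s₂ (e (e₀, 0))).1) = e₀ ∧ (s₂ (e (e₀, 0))).2 = 0 := by
    intro e₀
    have := DFunLike.congr_fun hs₂p (e (e₀, 0))
    have h1 : e (p (s₂ (e (e₀, 0))).1, (s₂ (e (e₀, 0))).2) = e (e₀, 0) := this
    have h2 : (p (s₂ (e (e₀, 0))).1, (s₂ (e (e₀, 0))).2) = (e₀, (0 : N'.carrier)) :=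
      e.injective h1
    exact ⟨congrArg Prod.fst h2, congrArg Prod.snd h2⟩
  refine ⟨s, ?_, ?_⟩
  · intro g e₀
    show (s₂ (e (E.ρ g e₀, 0))).1 = N.ρ g ((s₂ (e (e₀, 0))).1)
    have h0 : ((E.ρ g e₀ : E.carrier), (0 : N'.carrier)) = (E.sum N').ρ g (e₀, 0) := by
      rw [hρsum E N' g (e₀, 0)]
      simp
    rw [h0, he g (e₀, 0), hs₂eq, hρsum N N' g]
  · apply LinearMap.ext
    intro e₀
    show p ((s₂ (e (e₀, 0))).1) = e₀
    exact (hkey e₀).1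
end Paper
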